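/- Let P be an elliptical distribution with parameters μ and Σ = V(θ₀), V linear with L of full column rank, and let C be an affine equivariant, Fisher-consistent covariance functional whose influence function is IF(y; C, P) = α_C(d(y)) (y−μ)(y−μ)ᵀ − β_C(d(y)) Σ, where d(y)² = (y−μ)ᵀΣ⁻¹(y−μ). Define M by vec(M) = Π_L vec(C) with Π_L = L(Lᵀ(Σ⁻¹⊗Σ⁻¹)L)⁻¹Lᵀ(Σ⁻¹⊗Σ⁻¹). Then IF(y; vec(M), P) = α_C(d(y)) L (Lᵀ(Σ⁻¹⊗Σ⁻¹)L)⁻¹ Lᵀ vec(Σ⁻¹(y−μ)(y−μ)ᵀΣ⁻¹) − β_C(d(y)) vec(Σ). -/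

import Mathlib

open Matrix MeasureTheory Filter
open scoped Kronecker

/-- `vecm M` stacks the columns of `M` into a vector: `vecm M (j, i) = M i j`. -/
def vecm {k : ℕ} (M : Matrix (Fin k) (Fin k) ℝ) : Fin k × Fin k → ℝ :=
  fun p => M p.2 p.1

/-- `HasIF T P y v`: the statistical functional `T` has influence function value `v` at the
point `y` and distribution `P`, i.e. `(T((1-h)P + hδ_y) - T(P))/h → v` as `h ↓ 0`. -/
def HasIF {α : Type*} [MeasurableSpace α] {V : Type*} [AddCommGroup V] [Module ℝ V]
    [TopologicalSpace V]
    (T : MeasureTheory.Measure α → V) (P : MeasureTheory.Measure α) (y : α) (v : V) : Prop :=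
  Tendsto
    (fun h : ℝ => h⁻¹ •
      (T (ENNReal.ofReal (1 - h) • P + ENNReal.ofReal h • MeasureTheory.Measure.dirac y) - T P))
    (nhdsWithin 0 (Set.Ioi 0)) (nhds v)

/-- vec of Kronecker product action: `(A ⊗ₖ B) vec X = vec (B X Aᵀ)`. -/
lemma kron_mulVec_vecm {k : ℕ} (A B X : Matrix (Fin k) (Fin k) ℝ) :
    (A ⊗ₖ B).mulVec (vecm X) = vecm (B * X * Aᵀ) := by
  ext ⟨j, i⟩
  simp [Matrix.mulVec, dotProduct, vecm, Fintype.sum_prod_type, Matrix.mul_apply,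
    Finset.sum_mul, Finset.mul_sum]
  apply Finset.sum_congr rfl
  intro j' _
  apply Finset.sum_congr rfl
  intro i' _
  ring

lemma dot_self_pos {n : Type*} [Fintype n] {v : n → ℝ} (hv : v ≠ 0) : 0 < v ⬝ᵥ v := by
  have h1 : 0 ≤ v ⬝ᵥ v := Finset.sum_nonneg fun i _ => mul_self_nonneg _
  rcases h1.lt_or_eq with h | h
  · exact h
  · exfalso; apply hv
    ext i
    have := Finset.sum_eq_zero_iff_of_nonneg (fun i _ => mul_self_nonneg (v i)) |>.mp h.symm
    have h3 := this i (Finset.mem_univ i)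
    show v i = 0
    exact mul_self_eq_zero.mp h3

/-- positivity of the quadratic form of `S⁻¹ ⊗ₖ S⁻¹` for `S` positive definite. -/
lemma kron_posdef_dot {k : ℕ} (S : Matrix (Fin k) (Fin k) ℝ) (hS : S.PosDef)
    {v : Fin k × Fin k → ℝ} (hv : v ≠ 0) :
    0 < v ⬝ᵥ (S⁻¹ ⊗ₖ S⁻¹).mulVec v := by
  have hI : S⁻¹.PosDef := hS.inv
  simpa using (hI.kronecker hI).dotProduct_mulVec_pos hv

lemma mulVec_injective_of_rank {k l : ℕ} (L : Matrix (Fin k × Fin k) (Fin l) ℝ)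
    (hrank : L.rank = l) : Function.Injective L.mulVec := by
  have h1 : Module.finrank ℝ (LinearMap.range L.mulVecLin) +
      Module.finrank ℝ (LinearMap.ker L.mulVecLin) = l := by
    rw [LinearMap.finrank_range_add_finrank_ker]
    simp [Module.finrank_pi]
  have h2 : Module.finrank ℝ (LinearMap.range L.mulVecLin) = l := hrank
  have h3 : Module.finrank ℝ (LinearMap.ker L.mulVecLin) = 0 := by omega
  have h4 : LinearMap.ker L.mulVecLin = ⊥ := Submodule.finrank_eq_zero.mp h3
  have := LinearMap.ker_eq_bot.mp h4
  exact this

lemma vecm_smul {k : ℕ} (c : ℝ) (M : Matrix (Fin k) (Fin k) ℝ) :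
    vecm (c • M) = c • vecm M := rfl

lemma vecm_sub {k : ℕ} (M N : Matrix (Fin k) (Fin k) ℝ) :
    vecm (M - N) = vecm M - vecm N := rfl

/-- Lemma 1(i): let `P` be elliptical with parameters `μ`, `Σ = V(θ₀)` (linear structure,
`L` full column rank) and let `C` be an affine equivariant covariance functional, Fisher
consistent for `Σ`, with influence function
`IF(y; C, P) = α_C(d(y))(y-μ)(y-μ)ᵀ - β_C(d(y))Σ`.  Then the structured functional `M` with
`vec M = Π_L vec C` has influence function
`IF(y; vec M, P) = α_C(d(y)) L(Lᵀ(Σ⁻¹⊗Σ⁻¹)L)⁻¹Lᵀ vec(Σ⁻¹(y-μ)(y-μ)ᵀΣ⁻¹) - β_C(d(y)) vec Σ`. -/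
theorem IF_structured_covariance {k l : ℕ}
    (S : Matrix (Fin k) (Fin k) ℝ) (hS : S.PosDef)
    (μv : Fin k → ℝ)
    (θ₀ : Fin l → ℝ)
    (L : Matrix (Fin k × Fin k) (Fin l) ℝ)
    (hvec : vecm S = L.mulVec θ₀)
    (hrank : L.rank = l)
    (g : ℝ → ℝ)
    (P : Measure (Fin k → ℝ)) [IsProbabilityMeasure P]
    (hell : P = MeasureTheory.volume.withDensity fun y =>
      ENNReal.ofReal ((Real.sqrt S.det)⁻¹ * g ((y - μv) ⬝ᵥ S⁻¹.mulVec (y - μv))))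
    (C : Measure (Fin k → ℝ) → Matrix (Fin k) (Fin k) ℝ)
    (haff : ∀ (A : Matrix (Fin k) (Fin k) ℝ), IsUnit A.det → ∀ b : Fin k → ℝ,
      ∀ Q : Measure (Fin k → ℝ), IsProbabilityMeasure Q →
        C (Q.map fun x => A.mulVec x + b) = A * C Q * Aᵀ)
    (hFisher : C P = S)
    (αC βC : ℝ → ℝ)
    (hIF : ∀ y : Fin k → ℝ,
      HasIF (fun Q => vecm (C Q)) P y
        (vecm (αC (Real.sqrt ((y - μv) ⬝ᵥ S⁻¹.mulVec (y - μv))) • vecMulVec (y - μv) (y - μv)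
          - βC (Real.sqrt ((y - μv) ⬝ᵥ S⁻¹.mulVec (y - μv))) • S))) :
    ∀ y : Fin k → ℝ,
      HasIF
        (fun Q => (L * (Lᵀ * (S⁻¹ ⊗ₖ S⁻¹) * L)⁻¹ * Lᵀ * (S⁻¹ ⊗ₖ S⁻¹)).mulVec (vecm (C Q)))
        P y
        (αC (Real.sqrt ((y - μv) ⬝ᵥ S⁻¹.mulVec (y - μv))) •
            (L * (Lᵀ * (S⁻¹ ⊗ₖ S⁻¹) * L)⁻¹ * Lᵀ).mulVec
              (vecm (S⁻¹ * vecMulVec (y - μv) (y - μv) * S⁻¹))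
          - βC (Real.sqrt ((y - μv) ⬝ᵥ S⁻¹.mulVec (y - μv))) • vecm S) := by
  intro y
  set K := S⁻¹ ⊗ₖ S⁻¹ with hKdef
  set B := Lᵀ * K * L with hBdef
  set Pm := L * B⁻¹ * Lᵀ * K with hPmdef
  -- symmetry of S⁻¹
  have hSsym : Sᵀ = S := by
    have := hS.isHermitian
    rwa [Matrix.IsHermitian, Matrix.conjTranspose_eq_transpose_of_trivial] at this
  have hSinvSym : S⁻¹ᵀ = S⁻¹ := by
    rw [Matrix.transpose_nonsing_inv, hSsym]
  -- invertibility of B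
  have hLinj : Function.Injective L.mulVec := mulVec_injective_of_rank L hrank
  have hBinj : Function.Injective B.mulVec := by
    have hker : ∀ x, B.mulVec x = 0 → x = 0 := by
      intro x hx
      by_contra hxne
      have hLx : L.mulVec x ≠ 0 := by
        intro h
        apply hxne
        apply hLinj
        rw [h, Matrix.mulVec_zero]
      have hpos : 0 < (L.mulVec x) ⬝ᵥ K.mulVec (L.mulVec x) :=
        kron_posdef_dot S hS hLx
      have heq : x ⬝ᵥ B.mulVec x = (L.mulVec x) ⬝ᵥ K.mulVec (L.mulVec x) := by
        rw [hBdef, ← Matrix.mulVec_mulVec, ← Matrix.mulVec_mulVec,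
          Matrix.dotProduct_mulVec, Matrix.vecMul_transpose]
      rw [hx, dotProduct_zero] at heq
      linarith
    intro a b hab
    have : B.mulVec (a - b) = 0 := by
      rw [Matrix.mulVec_sub, hab, sub_self]
    have := hker _ this
    exact sub_eq_zero.mp this
  have hBunit : IsUnit B := Matrix.mulVec_injective_iff_isUnit.mp hBinj
  have hBinvB : B⁻¹ * B = 1 :=
    Matrix.nonsing_inv_mul B ((Matrix.isUnit_iff_isUnit_det B).mp hBunit)
  -- Π vec S = vec S
  have hPmS : Pm.mulVec (vecm S) = vecm S := by
    rw [hvec, Matrix.mulVec_mulVec]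
    have : Pm * L = L := by
      rw [hPmdef]
      calc L * B⁻¹ * Lᵀ * K * L = L * (B⁻¹ * (Lᵀ * K * L)) := by
            simp only [Matrix.mul_assoc]
        _ = L * (B⁻¹ * B) := by rw [← hBdef]
        _ = L := by rw [hBinvB, Matrix.mul_one]
    rw [this]
  -- Π vec A = (L B⁻¹ Lᵀ) vec (S⁻¹ A S⁻¹)
  have hPmA : ∀ X : Matrix (Fin k) (Fin k) ℝ,
      Pm.mulVec (vecm X) = (L * B⁻¹ * Lᵀ).mulVec (vecm (S⁻¹ * X * S⁻¹)) := by
    intro X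
    rw [hPmdef, ← Matrix.mulVec_mulVec, hKdef, kron_mulVec_vecm, hSinvSym]
  -- the target value equals Π applied to the IF of vec C
  have hval : Pm.mulVec (vecm (αC (Real.sqrt ((y - μv) ⬝ᵥ S⁻¹.mulVec (y - μv))) •
        vecMulVec (y - μv) (y - μv)
      - βC (Real.sqrt ((y - μv) ⬝ᵥ S⁻¹.mulVec (y - μv))) • S)) =
      αC (Real.sqrt ((y - μv) ⬝ᵥ S⁻¹.mulVec (y - μv))) •
          (L * B⁻¹ * Lᵀ).mulVec (vecm (S⁻¹ * vecMulVec (y - μv) (y - μv) * S⁻¹))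
        - βC (Real.sqrt ((y - μv) ⬝ᵥ S⁻¹.mulVec (y - μv))) • vecm S := by
    rw [vecm_sub, vecm_smul, vecm_smul, Matrix.mulVec_sub, Matrix.mulVec_smul,
      Matrix.mulVec_smul, hPmA, hPmS]
  -- continuity of the linear map
  have hcont : Continuous fun v : Fin k × Fin k → ℝ => Pm.mulVec v :=
    LinearMap.continuous_of_finiteDimensional Pm.mulVecLin
  have htend := (hcont.tendsto _).comp (hIF y)
  rw [hval] at htend
  unfold HasIF
  convert htend using 2 with h
  simp only [Function.comp_apply]
  rw [Matrix.mulVec_smul, Matrix.mulVec_sub]
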